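/- For n ∈ ℕ with n ≥ 1 and an integer k < 0, let A(n,k) := { x ∈ ℤⁿ : x_j ≤ 1 for j = 1,…,n and x_1 + ⋯ + x_n = k } and let a(n,k) denote its cardinality. Then a(n,k) ≤ a(n) · (|k| + (3/2)n)^{n−1}, where a(n) := (√n / α(n−1)) · 2^{n−1} / (n−1)! and α(m) denotes the Lebesgue volume of the unit ball in ℝ^m (with the convention α(0) = 1). -/

import Mathlib

open Finset MeasureTheory

lemma card_finsum {ι α : Type*} (s : Finset ι) (f : ι → Multiset α) :
    Multiset.card (∑ i ∈ s, f i) = ∑ i ∈ s, Multiset.card (f i) := by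
  induction s using Finset.cons_induction with
  | empty => simp
  | cons a s h ih => simp [Finset.sum_cons, ih]

-- AM-GM style bound for product of arithmetic progression
lemma prod_sub_le (r : ℕ) (c M : ℝ) (hc : (r : ℝ) - 1 ≤ c)
    (hM : 2 * M = 2 * c - ((r : ℝ) - 1)) :
    ∏ i ∈ Finset.range r, (c - i) ≤ M ^ r := by
  rcases Nat.eq_zero_or_pos r with hr | hr
  · simp [hr]
  have hterm : ∀ i ∈ Finset.range r, (0 : ℝ) ≤ c - i := by
    intro i hi
    have : (i : ℝ) ≤ (r : ℝ) - 1 := by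
      have := Finset.mem_range.mp hi
      have : (i : ℝ) ≤ (r : ℝ) - 1 := by
        have h1 : i + 1 ≤ r := this
        have := Nat.cast_le (α := ℝ).mpr h1
        push_cast at this; linarith
      exact this
    linarith
  have hP : (0 : ℝ) ≤ ∏ i ∈ Finset.range r, (c - i) := Finset.prod_nonneg hterm
  have hc0 : (0 : ℝ) ≤ c := by
    have : (1 : ℝ) ≤ r := by exact_mod_cast hr
    linarith
  have hM0 : (0 : ℝ) ≤ M := by linarith
  have key : (∏ i ∈ Finset.range r, (c - i)) ^ 2 ≤ (M ^ r) ^ 2 := by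
    have hrefl : ∏ i ∈ Finset.range r, (c - i)
        = ∏ i ∈ Finset.range r, (c - (r - 1 - i : ℕ)) :=
      (Finset.prod_range_reflect (fun i => (c - i : ℝ)) r).symm
    calc (∏ i ∈ Finset.range r, (c - i)) ^ 2
        = ∏ i ∈ Finset.range r, ((c - i) * (c - (r - 1 - i : ℕ))) := by
          rw [sq]; nth_rewrite 2 [hrefl]; rw [← Finset.prod_mul_distrib]
      _ ≤ ∏ i ∈ Finset.range r, M ^ 2 := by
          apply Finset.prod_le_prod
          · intro i hi
            apply mul_nonneg (hterm i hi)
            apply hterm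
            simp only [Finset.mem_range] at hi ⊢
            omega
          · intro i hi
            have hi' := Finset.mem_range.mp hi
            have hcast : ((r - 1 - i : ℕ) : ℝ) = (r : ℝ) - 1 - i := by
              have h2 : (r - 1 - i) + (i + 1) = r := by omega
              have h3 := congrArg (Nat.cast : ℕ → ℝ) h2
              push_cast at h3; linarith
            rw [hcast]
            nlinarith [sq_nonneg (c - i - M)]
      _ = (M ^ r) ^ 2 := by rw [Finset.prod_const, Finset.card_range, ← pow_mul, ← pow_mul,
            Nat.mul_comm]
  exact (pow_le_pow_iff_left₀ hP (pow_nonneg hM0 r) two_ne_zero).mp key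

theorem stmt2 (n : ℕ) (hn : 1 ≤ n) (k : ℤ) (hk : k < 0) :
    (Nat.card {x : Fin n → ℤ // (∀ j, x j ≤ 1) ∧ ∑ j, x j = k} : ℝ) ≤
      (Real.sqrt n /
          (MeasureTheory.volume (Metric.ball (0 : EuclideanSpace ℝ (Fin (n - 1))) 1)).toReal) *
        2 ^ (n - 1) / (n - 1).factorial *
        (|(k : ℝ)| + (3 / 2) * n) ^ (n - 1) := by
  classical
  set q : ℕ := (-k).toNat with hqdef
  have hq : (q : ℤ) = -k := Int.toNat_of_nonneg (by omega)
  have hq1 : 1 ≤ q := by omega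
  set m : ℕ := n + q with hmdef
  set r : ℕ := n - 1 with hrdef
  set N : ℕ := n + m - 1 with hNdef
  clear_value q
  clear_value m
  clear_value r
  clear_value N
  -- Step 1: card ≤ choose N r
  have hcard : Nat.card {x : Fin n → ℤ // (∀ j, x j ≤ 1) ∧ ∑ j, x j = k} ≤ N.choose r := by
    have hinj : ∃ f : {x : Fin n → ℤ // (∀ j, x j ≤ 1) ∧ ∑ j, x j = k} → Sym (Fin n) m,
        Function.Injective f := by
      refine ⟨fun x => ⟨∑ j : Fin n, Multiset.replicate ((1 - x.val j).toNat) j, ?_⟩, ?_⟩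
      · rw [card_finsum]
        simp only [Multiset.card_replicate]
        have : ((∑ j : Fin n, (1 - x.val j).toNat : ℕ) : ℤ) = m := by
          push_cast
          rw [Finset.sum_congr rfl (fun j _ => Int.toNat_of_nonneg (by
            have := x.prop.1 j; omega))]
          rw [Finset.sum_sub_distrib, x.prop.2]
          simp [hmdef, hq]
          omega
        exact_mod_cast this
      · intro x y hxy
        have hcount : ∀ j : Fin n, (1 - x.val j).toNat = (1 - y.val j).toNat := by
          intro j
          have := congrArg (fun s : Sym (Fin n) m => Multiset.count j s.val) hxy
          simpa [Multiset.count_sum', Multiset.count_replicate] using this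
        ext1; funext j
        have h1 := x.prop.1 j
        have h2 := y.prop.1 j
        have := hcount j
        omega
    obtain ⟨f, hf⟩ := hinj
    calc Nat.card {x : Fin n → ℤ // (∀ j, x j ≤ 1) ∧ ∑ j, x j = k}
        ≤ Nat.card (Sym (Fin n) m) := Nat.card_le_card_of_injective f hf
      _ = N.choose r := by
          rw [Nat.card_eq_fintype_card, Sym.card_sym_eq_multichoose, Nat.multichoose_eq,
            Fintype.card_fin, hNdef.symm,
            ← Nat.choose_symm (show m ≤ N by omega)]
          congr 1
          omega
  -- Step 2: choose N r ≤ M^r / r!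
  set M : ℝ := |(k : ℝ)| + (3 / 2) * n with hMdef
  clear_value M
  have habs : |(k : ℝ)| = (q : ℝ) := by
    rw [abs_of_neg (show (k:ℝ) < 0 by exact_mod_cast hk)]
    exact (show ((q:ℕ):ℝ) = -(k:ℝ) by exact_mod_cast hq).symm
  have hchoose : (N.choose r : ℝ) ≤ M ^ r / r.factorial := by
    clear hcard
    rw [le_div_iff₀ (show (0:ℝ) < r.factorial by exact_mod_cast r.factorial_pos), mul_comm]
    have hdesc : (r.factorial : ℝ) * N.choose r = N.descFactorial r := by
      exact_mod_cast (Nat.descFactorial_eq_factorial_mul_choose N r).symm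
    rw [hdesc]
    have hprod : (N.descFactorial r : ℝ) = ∏ i ∈ Finset.range r, ((N : ℝ) - i) := by
      rw [Nat.descFactorial_eq_prod_range, Nat.cast_prod]
      exact Finset.prod_congr rfl fun i hi => by
        rw [Nat.cast_sub (by have := Finset.mem_range.mp hi; omega)]
    rw [hprod]
    apply prod_sub_le
    · have : (r : ℝ) + 1 ≤ N := by exact_mod_cast (show r + 1 ≤ N by omega)
      linarith
    · have hNr : (N : ℝ) = 2 * n + q - 1 := by
        have : N = 2 * n + q - 1 := by omega
        have h' : (N : ℤ) = 2 * n + q - 1 := by omega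
        exact_mod_cast h'
      have hrr : (r : ℝ) = (n : ℝ) - 1 := by
        rw [hrdef, Nat.cast_sub hn]; simp
      rw [hMdef, habs, hNr, hrr]; ring
  -- Step 3: volume bound
  set α : ℝ := (volume (Metric.ball (0 : EuclideanSpace ℝ (Fin r)) 1)).toReal with hαdef
  clear_value α
  have hball_fin : volume (Metric.ball (0 : EuclideanSpace ℝ (Fin r)) 1) < ⊤ :=
    measure_ball_lt_top
  have hα_pos : 0 < α := by
    rw [hαdef]
    exact ENNReal.toReal_pos (Metric.measure_ball_pos volume _ one_pos).ne' hball_fin.ne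
  have hα_le : α ≤ 2 ^ r := by
    have hsub : Metric.ball (0 : EuclideanSpace ℝ (Fin r)) 1 ⊆
        (MeasurableEquiv.toLp 2 (Fin r → ℝ)).symm ⁻¹'
          (Set.pi Set.univ fun _ : Fin r => Set.Icc (-1 : ℝ) 1) := by
      intro x hx
      simp only [Set.mem_preimage, Set.mem_pi, Set.mem_univ, forall_true_left, Set.mem_Icc]
      intro i
      have hnorm : ‖x‖ < 1 := by simpa using mem_ball_iff_norm.mp hx
      have hxi : |x i| ≤ ‖x‖ := by
        rw [EuclideanSpace.norm_eq]
        rw [← Real.sqrt_sq_eq_abs]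
        apply Real.sqrt_le_sqrt
        calc x i ^ 2 = ‖x i‖ ^ 2 := by rw [Real.norm_eq_abs, sq_abs]
          _ ≤ ∑ j, ‖x j‖ ^ 2 := Finset.single_le_sum (f := fun j => ‖x j‖ ^ 2)
              (fun j _ => by positivity) (Finset.mem_univ i)
      have habs : |x i| ≤ 1 := le_of_lt (lt_of_le_of_lt hxi hnorm)
      rw [abs_le] at habs
      simpa using habs
    have hmeas : MeasurableSet (Set.pi Set.univ fun _ : Fin r => Set.Icc (-1 : ℝ) 1) :=
      MeasurableSet.univ_pi fun _ => measurableSet_Icc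
    have hvol : volume ((MeasurableEquiv.toLp 2 (Fin r → ℝ)).symm ⁻¹'
        (Set.pi Set.univ fun _ : Fin r => Set.Icc (-1 : ℝ) 1)) = ENNReal.ofReal 2 ^ r := by
      rw [(EuclideanSpace.volume_preserving_symm_measurableEquiv_toLp (Fin r)).measure_preimage
        hmeas.nullMeasurableSet]
      rw [volume_pi_pi]
      simp [Real.volume_Icc]
      norm_num
    have hle := measure_mono (μ := (volume : Measure (EuclideanSpace ℝ (Fin r)))) hsub
    rw [hvol] at hle
    calc α = (volume (Metric.ball (0 : EuclideanSpace ℝ (Fin r)) 1)).toReal := hαdef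
      _ ≤ (ENNReal.ofReal 2 ^ r).toReal :=
          ENNReal.toReal_mono (ENNReal.pow_ne_top ENNReal.ofReal_ne_top) hle
      _ = 2 ^ r := by
          rw [ENNReal.toReal_pow, ENNReal.toReal_ofReal (by norm_num)]
  -- Step 4: assemble
  have hM0 : 0 ≤ M := by rw [hMdef]; positivity
  have hsqrt : 1 ≤ Real.sqrt n := by
    rw [show (1 : ℝ) = Real.sqrt 1 by simp]
    exact Real.sqrt_le_sqrt (by exact_mod_cast hn)
  have hfact : (0 : ℝ) < r.factorial := by exact_mod_cast r.factorial_pos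
  have hcoef : (1 : ℝ) ≤ Real.sqrt n / α * 2 ^ r := by
    rw [div_mul_eq_mul_div, le_div_iff₀ hα_pos, one_mul]
    calc α ≤ 2 ^ r := hα_le
      _ = 1 * 2 ^ r := (one_mul _).symm
      _ ≤ Real.sqrt n * 2 ^ r := by
          apply mul_le_mul_of_nonneg_right hsqrt (by positivity)
  calc (Nat.card {x : Fin n → ℤ // (∀ j, x j ≤ 1) ∧ ∑ j, x j = k} : ℝ)
      ≤ (N.choose r : ℝ) := by exact_mod_cast hcard
    _ ≤ M ^ r / r.factorial := hchoose
    _ = 1 * (M ^ r / r.factorial) := (one_mul _).symm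
    _ ≤ (Real.sqrt n / α * 2 ^ r) * (M ^ r / r.factorial) := by
        apply mul_le_mul_of_nonneg_right hcoef (by positivity)
    _ = Real.sqrt n / α * 2 ^ r / r.factorial * M ^ r := by ring
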